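/- Let P : ℂ² → ℂ² be the map P(z,w) = (z², w³), whose k-th iterate is P_k(z,w) = (z^{2^k}, w^{3^k}). Then the functions f_k(z,w) = 3^{-k} · log(1 + |z|^{2·2^k} + |w|^{2·3^k}) converge to G(z,w) = log⁺ |w|² uniformly on every compact subset of ℂ² as k → ∞. -/

import Mathlib

/-- `log⁺ r = max (log r) 0`. -/
noncomputable def logPlus (r : ℝ) : ℝ := max (Real.log r) 0

lemma logPlus_eq {r : ℝ} (h : 0 ≤ r) : logPlus r = Real.log (max r 1) := by
  rcases le_total r 1 with h1 | h1
  · rw [logPlus, max_eq_right (Real.log_nonpos h h1), max_eq_right h1, Real.log_one]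
  · rw [logPlus, max_eq_left (Real.log_nonneg h1), max_eq_left h1]

/-- For `P(z,w) = (z², w³)`, the functions
`f_k(z,w) = 3^{-k} · log(1 + |z|^{2·2^k} + |w|^{2·3^k})` converge to
`G(z,w) = log⁺ |w|²` uniformly on every compact subset of `ℂ²`. -/
theorem stmt6 :
    ∀ K : Set (ℂ × ℂ), IsCompact K →
      TendstoUniformlyOn
        (fun (k : ℕ) (p : ℂ × ℂ) =>
          ((3 : ℝ) ^ k)⁻¹ *
            Real.log (1 + ‖p.1‖ ^ (2 * 2 ^ k) + ‖p.2‖ ^ (2 * 3 ^ k)))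
        (fun p : ℂ × ℂ => logPlus (‖p.2‖ ^ 2))
        Filter.atTop K := by
  intro K hK
  obtain ⟨R, hR⟩ := hK.isBounded.subset_closedBall 0
  set M : ℝ := max R 1 with hMdef
  have hM1 : (1:ℝ) ≤ M := le_max_right _ _
  have hM0 : (0:ℝ) < M := lt_of_lt_of_le one_pos hM1
  rw [Metric.tendstoUniformlyOn_iff]
  intro ε hε
  have hδ : Filter.Tendsto
      (fun k : ℕ => ((3:ℝ)^k)⁻¹ * Real.log 3 + 2 * ((2:ℝ)/3)^k * Real.log M)
      Filter.atTop (nhds 0) := by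
    have h1 : Filter.Tendsto (fun k : ℕ => ((3:ℝ)⁻¹)^k) Filter.atTop (nhds 0) :=
      tendsto_pow_atTop_nhds_zero_of_lt_one (by norm_num) (by norm_num)
    have h2 : Filter.Tendsto (fun k : ℕ => ((2:ℝ)/3)^k) Filter.atTop (nhds 0) :=
      tendsto_pow_atTop_nhds_zero_of_lt_one (by norm_num) (by norm_num)
    have h3 := (h1.mul_const (Real.log 3)).add ((h2.mul_const (Real.log M)).const_mul 2)
    simp only [zero_mul, mul_zero, add_zero] at h3
    refine Filter.Tendsto.congr (fun k => ?_) h3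
    rw [inv_pow]; ring
  filter_upwards [hδ.eventually (gt_mem_nhds hε)] with k hk x hx
  set a : ℝ := ‖x.1‖ with hadef
  set b : ℝ := ‖x.2‖ with hbdef
  have ha0 : 0 ≤ a := norm_nonneg _
  have hb0 : 0 ≤ b := norm_nonneg _
  have hxR : ‖x‖ ≤ R := by simpa using hR hx
  have haM : a ≤ M := by
    calc a = ‖x.1‖ := rfl
    _ ≤ ‖x‖ := norm_fst_le x
    _ ≤ M := le_trans hxR (le_max_left _ _)
  have hbM : b ≤ M := by
    calc b = ‖x.2‖ := rfl
    _ ≤ ‖x‖ := norm_snd_le x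
    _ ≤ M := le_trans hxR (le_max_left _ _)
  set T : ℝ := max (b^2) 1 with hTdef
  have hT1 : (1:ℝ) ≤ T := le_max_right _ _
  have hT0 : (0:ℝ) < T := lt_of_lt_of_le one_pos hT1
  set S : ℝ := 1 + a ^ (2 * 2 ^ k) + b ^ (2 * 3 ^ k) with hSdef
  have hbpow : b ^ (2 * 3 ^ k) = (b ^ 2) ^ (3 ^ k) := by rw [pow_mul]
  have hS1 : (1:ℝ) ≤ S := by
    have h1 : 0 ≤ a ^ (2 * 2 ^ k) := pow_nonneg ha0 _
    have h2 : 0 ≤ b ^ (2 * 3 ^ k) := pow_nonneg hb0 _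
    simp only [hSdef]; linarith
  have hS0 : (0:ℝ) < S := lt_of_lt_of_le one_pos hS1
  -- lower bound
  have hlow : T ^ (3 ^ k) ≤ S := by
    rcases le_total (b^2) 1 with h | h
    · have : T = 1 := max_eq_right h
      rw [this, one_pow]; exact hS1
    · have hT : T = b ^ 2 := max_eq_left h
      rw [hT, ← hbpow]
      have h1 : 0 ≤ a ^ (2 * 2 ^ k) := pow_nonneg ha0 _
      simp only [hSdef]; linarith
  -- upper bound
  have hQ1 : (1:ℝ) ≤ M ^ (2 * 2 ^ k) * T ^ (3 ^ k) :=
    one_le_mul_of_one_le_of_one_le (one_le_pow₀ hM1) (one_le_pow₀ hT1)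
  have hup : S ≤ 3 * (M ^ (2 * 2 ^ k) * T ^ (3 ^ k)) := by
    have e1 : a ^ (2 * 2 ^ k) ≤ M ^ (2 * 2 ^ k) * T ^ (3 ^ k) := by
      calc a ^ (2 * 2 ^ k) ≤ M ^ (2 * 2 ^ k) := pow_le_pow_left₀ ha0 haM _
      _ ≤ M ^ (2 * 2 ^ k) * T ^ (3 ^ k) :=
        le_mul_of_one_le_right (pow_nonneg hM0.le _) (one_le_pow₀ hT1)
    have e2 : b ^ (2 * 3 ^ k) ≤ M ^ (2 * 2 ^ k) * T ^ (3 ^ k) := by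
      calc b ^ (2 * 3 ^ k) = (b ^ 2) ^ (3 ^ k) := hbpow
      _ ≤ T ^ (3 ^ k) := pow_le_pow_left₀ (sq_nonneg b) (le_max_left _ _) _
      _ ≤ M ^ (2 * 2 ^ k) * T ^ (3 ^ k) :=
        le_mul_of_one_le_left (pow_nonneg hT0.le _) (one_le_pow₀ hM1)
    simp only [hSdef]; linarith
  -- log bounds
  have hloglow : (3:ℝ) ^ k * Real.log T ≤ Real.log S := by
    have := Real.log_le_log (pow_pos hT0 _) hlow
    rwa [Real.log_pow, Nat.cast_pow, Nat.cast_ofNat] at this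
  have hlogup : Real.log S ≤ Real.log 3 + (2 * 2 ^ k : ℝ) * Real.log M + (3:ℝ) ^ k * Real.log T := by
    have h1 := Real.log_le_log hS0 hup
    have h2 : Real.log (3 * (M ^ (2 * 2 ^ k) * T ^ (3 ^ k))) =
        Real.log 3 + ((2 * 2 ^ k : ℕ) : ℝ) * Real.log M + ((3 ^ k : ℕ) : ℝ) * Real.log T := by
      rw [Real.log_mul (by norm_num) (by positivity),
        Real.log_mul (by positivity) (by positivity), Real.log_pow, Real.log_pow]
      ring
    rw [h2] at h1
    refine h1.trans (le_of_eq ?_)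
    push_cast
    ring
  have hGeq : logPlus (b ^ 2) = Real.log T := logPlus_eq (sq_nonneg b)
  have h3kpos : (0:ℝ) < (3:ℝ) ^ k := by positivity
  have hinv : (0:ℝ) ≤ ((3:ℝ) ^ k)⁻¹ := by positivity
  -- f ≥ G
  have hfg : Real.log T ≤ ((3:ℝ) ^ k)⁻¹ * Real.log S := by
    have := mul_le_mul_of_nonneg_left hloglow hinv
    rwa [← mul_assoc, inv_mul_cancel₀ h3kpos.ne', one_mul] at this
  -- f ≤ G + δ
  have hfG : ((3:ℝ) ^ k)⁻¹ * Real.log S ≤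
      (((3:ℝ) ^ k)⁻¹ * Real.log 3 + 2 * ((2:ℝ)/3) ^ k * Real.log M) + Real.log T := by
    have := mul_le_mul_of_nonneg_left hlogup hinv
    refine this.trans (le_of_eq ?_)
    have h23 : ((2:ℝ)/3) ^ k = 2 ^ k / 3 ^ k := div_pow 2 3 k
    rw [h23]
    field_simp
  have hδnn : 0 ≤ ((3:ℝ) ^ k)⁻¹ * Real.log 3 + 2 * ((2:ℝ)/3) ^ k * Real.log M := by
    have l3 : 0 ≤ Real.log 3 := Real.log_nonneg (by norm_num)
    have lM : 0 ≤ Real.log M := Real.log_nonneg hM1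
    positivity
  rw [Real.dist_eq, hGeq, abs_sub_comm, abs_of_nonneg (by linarith [hfg])]
  linarith [hfG, hk]
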